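/- Let n ≥ 2 be an integer and let α be a real number with α ∈ ℕ or α ≥ n−2. Then for every n×n real symmetric positive semidefinite matrix A = (a_ij) with all entries nonnegative, the entrywise power A^{∘α} := (a_ij^α) is positive semidefinite. -/

import Mathlib

open Matrix intervalIntegral

/-- Entrywise power with the convention `0 ^ α := 0` for all `α`. -/
noncomputable def powF (α x : ℝ) : ℝ := if x = 0 then 0 else x ^ α

/-- `ψ_α(x) := sgn(x) * |x| ^ α`, with `ψ_α(0) := 0`. -/
noncomputable def psiF (α x : ℝ) : ℝ := if x = 0 then 0 else Real.sign x * |x| ^ α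

/-- `φ_α(x) := |x| ^ α`, with `φ_α(0) := 0`. -/
noncomputable def phiF (α x : ℝ) : ℝ := if x = 0 then 0 else |x| ^ α

section Helpers

lemma FH.powF_eq {α : ℝ} (hα : α ≠ 0) (x : ℝ) : powF α x = x ^ α := by
  unfold powF; split_ifs with h
  · rw [h, Real.zero_rpow hα]
  · rfl

lemma FH.powF_nonneg {α x : ℝ} (hx : 0 ≤ x) : 0 ≤ powF α x := by
  unfold powF; split_ifs with h
  · exact le_refl 0
  · exact Real.rpow_nonneg hx α

lemma FH.powF_of_ne {α x : ℝ} (h : x ≠ 0) : powF α x = x ^ α := if_neg h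

lemma FH.powF_zero (α : ℝ) : powF α 0 = 0 := if_pos rfl

lemma FH.quad_nonneg {m : ℕ} {M : Matrix (Fin m) (Fin m) ℝ} (h : M.PosSemidef)
    (x : Fin m → ℝ) : 0 ≤ ∑ i, ∑ j, x i * M i j * x j := by
  have := h.dotProduct_mulVec_nonneg x
  simpa [dotProduct, Matrix.mulVec, Finset.mul_sum, mul_assoc, mul_left_comm,
    mul_comm] using this

lemma FH.psd_of_quad {m : ℕ} {M : Matrix (Fin m) (Fin m) ℝ} (hsym : ∀ i j, M i j = M j i)
    (h : ∀ x : Fin m → ℝ, 0 ≤ ∑ i, ∑ j, x i * M i j * x j) : M.PosSemidef := by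
  refine Matrix.PosSemidef.of_dotProduct_mulVec_nonneg ?_ ?_
  · ext i j
    simp [Matrix.conjTranspose_apply, hsym j i]
  · intro x
    have := h x
    simpa [dotProduct, Matrix.mulVec, Finset.mul_sum, mul_assoc, mul_left_comm,
      mul_comm] using this

lemma FH.psd_symm {m : ℕ} {M : Matrix (Fin m) (Fin m) ℝ} (h : M.PosSemidef) :
    ∀ i j, M i j = M j i := by
  intro i j; conv_lhs => rw [← h.1]
  simp [Matrix.conjTranspose_apply]

lemma FH.schur_quad {m : ℕ} {A B : Matrix (Fin m) (Fin m) ℝ} (hA : A.PosSemidef)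
    (hB : B.PosSemidef) (x : Fin m → ℝ) :
    0 ≤ ∑ i, ∑ j, x i * (A i j * B i j) * x j := by
  obtain ⟨S, rfl⟩ : ∃ S : Matrix (Fin m) (Fin m) ℝ, B = Sᴴ * S := by
    open scoped MatrixOrder in
    exact CStarAlgebra.nonneg_iff_eq_star_mul_self.mp hB.nonneg
  have key : ∀ i j : Fin m, x i * (A i j * (Sᴴ * S) i j) * x j
      = ∑ k, (x i * S k i) * A i j * (x j * S k j) := by
    intro i j
    simp only [Matrix.mul_apply, Matrix.conjTranspose_apply, RCLike.star_def,
      Finset.mul_sum, Finset.sum_mul]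
    refine Finset.sum_congr rfl fun k _ => by
      simp only [RingHom.coe_coe, starRingEnd_apply, star_trivial]; ring
  calc (0:ℝ) ≤ ∑ k, ∑ i, ∑ j, (x i * S k i) * A i j * (x j * S k j) :=
        Finset.sum_nonneg fun k _ => FH.quad_nonneg hA _
    _ = ∑ i, ∑ j, x i * (A i j * (Sᴴ * S) i j) * x j := by
        rw [Finset.sum_comm]
        refine Finset.sum_congr rfl fun i _ => ?_
        rw [Finset.sum_comm]
        exact Finset.sum_congr rfl fun j _ => (key i j).symm

lemma FH.quad_rank1 {m : ℕ} (v : Fin m → ℝ) (k : ℝ) (hk : 0 ≤ k) (x : Fin m → ℝ) :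
    0 ≤ ∑ i, ∑ j, x i * (v i * v j * k) * x j := by
  have : ∑ i, ∑ j, x i * (v i * v j * k) * x j
      = ((∑ i, x i * v i) * (∑ j, x j * v j)) * k := by
    rw [Finset.sum_mul_sum, Finset.sum_mul]
    refine Finset.sum_congr rfl fun i _ => ?_
    rw [Finset.sum_mul]
    exact Finset.sum_congr rfl fun j _ => by ring
  rw [this]
  exact mul_nonneg (mul_self_nonneg _) hk

lemma FH.sum_reduce {m : ℕ} (f : Fin (m+1) → Fin (m+1) → ℝ)
    (hrow : ∀ j, f (Fin.last m) j = 0) (hcol : ∀ i, f i (Fin.last m) = 0) :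
    ∑ i, ∑ j, f i j = ∑ i : Fin m, ∑ j : Fin m, f i.castSucc j.castSucc := by
  rw [Fin.sum_univ_castSucc]
  simp only [hrow, Finset.sum_const_zero, add_zero]
  refine Finset.sum_congr rfl fun i _ => ?_
  rw [Fin.sum_univ_castSucc, hcol, add_zero]

lemma FH.sq_entry_le {M : Matrix (Fin 2) (Fin 2) ℝ} (h : M.PosSemidef) :
    M 0 1 * M 0 1 ≤ M 0 0 * M 1 1 := by
  have key : ∀ t : ℝ, 0 ≤ M 0 0 * (t * t) + (2 * M 0 1) * t + M 1 1 := by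
    intro t
    have h0 := FH.quad_nonneg h ![t, 1]
    simp [Fin.sum_univ_two] at h0
    have hs := FH.psd_symm h 0 1
    calc (0:ℝ) ≤ _ := h0
      _ = M 0 0 * (t * t) + 2 * M 0 1 * t + M 1 1 := by rw [hs]; ring
  have := discrim_le_zero key
  unfold discrim at this
  nlinarith

lemma FH.psd2 {M : Matrix (Fin 2) (Fin 2) ℝ} (hsym : M 0 1 = M 1 0)
    (hp : 0 ≤ M 0 0) (hr : 0 ≤ M 1 1) (hq : M 0 1 * M 0 1 ≤ M 0 0 * M 1 1) :
    M.PosSemidef := by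
  refine FH.psd_of_quad (fun i j => by fin_cases i <;> fin_cases j <;> simp [hsym]) fun x => ?_
  rw [Fin.sum_univ_two, Fin.sum_univ_two, Fin.sum_univ_two]
  set p := M 0 0; set q := M 0 1; set r := M 1 1
  rw [show M 1 0 = q from hsym.symm]
  rcases eq_or_lt_of_le hp with h0 | h0
  · have hq0 : q = 0 := by nlinarith
    rw [hq0, ← h0]
    nlinarith [mul_self_nonneg (x 1)]
  · nlinarith [sq_nonneg (p * x 0 + q * x 1), mul_nonneg (sub_nonneg.2 hq) (sq_nonneg (x 1))]

lemma FH.cont_rpow {β : ℝ} (hβ : 0 ≤ β) : Continuous fun x : ℝ => x ^ β := by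
  rcases eq_or_lt_of_le hβ with h | h
  · simp only [← h, Real.rpow_zero]; exact continuous_const
  · exact continuous_iff_continuousAt.2 fun x =>
      Real.continuousAt_rpow_const x β (Or.inr hβ)

lemma FH.key_int {α : ℝ} (hα : 1 ≤ α) (a d : ℝ) :
    a ^ α = d ^ α + ∫ t in (0:ℝ)..1, α * (a - d) * ((1 - t) * d + t * a) ^ (α - 1) := by
  set u : ℝ → ℝ := fun t => (1 - t) * d + t * a with hu
  have hderiv : ∀ t : ℝ, HasDerivAt (fun t => u t ^ α)
      (α * (a - d) * u t ^ (α - 1)) t := by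
    intro t
    have h1 : HasDerivAt u (a - d) t := by
      have : u = fun t => d + (a - d) * t := by funext s; simp [hu]; ring
      rw [this]
      simpa using ((hasDerivAt_id t).const_mul (a - d)).const_add d
    have h2 : HasDerivAt (fun x : ℝ => x ^ α) (α * u t ^ (α - 1)) (u t) :=
      Real.hasDerivAt_rpow_const (Or.inr hα)
    have := h2.comp t h1
    rw [show α * (a - d) * u t ^ (α - 1) = α * u t ^ (α - 1) * (a - d) by ring]
    exact this
  have hcont : Continuous fun t => α * (a - d) * u t ^ (α - 1) := by
    have h1 : Continuous u := by fun_prop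
    exact continuous_const.mul ((FH.cont_rpow (by linarith : (0:ℝ) ≤ α - 1)).comp h1)
  have := intervalIntegral.integral_eq_sub_of_hasDerivAt
    (fun t _ => hderiv t) (hcont.intervalIntegrable 0 1)
  rw [this]
  have h0 : u 0 = d := by simp [hu]
  have h1 : u 1 = a := by simp [hu]
  rw [h0, h1]; ring

lemma FH.hadamard_pow {m : ℕ} {A : Matrix (Fin m) (Fin m) ℝ} (hA : A.PosSemidef) (k : ℕ) :
    (Matrix.of fun i j => A i j ^ (k + 1)).PosSemidef := by
  induction k with
  | zero => simp only [zero_add, pow_one]; exact hA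
  | succ k ih =>
    refine FH.psd_of_quad (fun i j => by simp [FH.psd_symm hA i j]) fun x => ?_
    have := FH.schur_quad ih hA x
    simpa [pow_succ] using this

end Helpers

section Main

lemma FH.main : ∀ (n : ℕ) (α : ℝ), (n : ℝ) ≤ α →
    ∀ A : Matrix (Fin (n+2)) (Fin (n+2)) ℝ, A.PosSemidef → (∀ i j, 0 ≤ A i j) →
    (A.map (powF α)).PosSemidef := by
  intro n
  induction n with
  | zero =>
    intro α hα A hA hnn
    have h00 : (0:ℝ) ≤ α := by simpa using hα
    have hsym := FH.psd_symm hA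
    have h01 : (A.map (powF α)) 0 1 = (A.map (powF α)) 1 0 := by
      simp [Matrix.map_apply, hsym 0 1]
    refine FH.psd2 h01 (FH.powF_nonneg (hnn 0 0)) (FH.powF_nonneg (hnn 1 1)) ?_
    have hsq := FH.sq_entry_le hA
    simp only [Matrix.map_apply]
    rcases eq_or_lt_of_le (hnn 0 1) with hb | hb
    · rw [← hb, FH.powF_zero]
      simpa using mul_nonneg (FH.powF_nonneg (hnn 0 0)) (FH.powF_nonneg (hnn 1 1))
    · have ha : 0 < A 0 0 := by
        rcases eq_or_lt_of_le (hnn 0 0) with h | h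
        · exfalso; rw [← h, zero_mul] at hsq; nlinarith [mul_pos hb hb]
        · exact h
      have hc : 0 < A 1 1 := by
        rcases eq_or_lt_of_le (hnn 1 1) with h | h
        · exfalso; rw [← h, mul_zero] at hsq; nlinarith [mul_pos hb hb]
        · exact h
      rw [FH.powF_of_ne hb.ne', FH.powF_of_ne ha.ne', FH.powF_of_ne hc.ne']
      calc A 0 1 ^ α * A 0 1 ^ α = (A 0 1 * A 0 1) ^ α :=
            (Real.mul_rpow hb.le hb.le).symm
        _ ≤ (A 0 0 * A 1 1) ^ α := Real.rpow_le_rpow (by positivity) hsq h00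
        _ = A 0 0 ^ α * A 1 1 ^ α := Real.mul_rpow ha.le hc.le
  | succ n ih =>
    intro α hα A hA hnn
    have hα1 : (1:ℝ) ≤ α := by
      have : (0:ℝ) ≤ (n:ℝ) := Nat.cast_nonneg n
      push_cast at hα; linarith
    have hαne : α ≠ 0 := by linarith
    have hsym := FH.psd_symm hA
    set l : Fin (n+1+2) := Fin.last (n+2) with hl
    have msym : ∀ i j, (A.map (powF α)) i j = (A.map (powF α)) j i := by
      intro i j; simp [Matrix.map_apply, hsym i j]
    rcases eq_or_lt_of_le (hnn l l) with hc | hc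
    · -- last diagonal entry is zero: last row and column vanish
      have hb0 : ∀ i, A i l = 0 := by
        intro i
        have hsq := FH.sq_entry_le (hA.submatrix ![i, l])
        simp only [Matrix.submatrix_apply, Matrix.cons_val_zero, Matrix.cons_val_one,
          Matrix.head_cons] at hsq
        rw [← hc, mul_zero] at hsq
        exact mul_self_eq_zero.mp (le_antisymm hsq (mul_self_nonneg _))
      refine FH.psd_of_quad msym fun x => ?_
      rw [FH.sum_reduce (fun i j => x i * (A.map (powF α)) i j * x j)
        (fun j => by
          show x l * (A.map (powF α)) l j * x j = 0
          rw [Matrix.map_apply, hsym l j, hb0 j, FH.powF_zero]; ring)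
        (fun i => by
          show x i * (A.map (powF α)) i l * x l = 0
          rw [Matrix.map_apply, hb0 i, FH.powF_zero]; ring)]
      have hA' := ih α (by push_cast at hα ⊢; linarith)
        (A.submatrix Fin.castSucc Fin.castSucc) (hA.submatrix _)
        (fun i j => hnn _ _)
      have := FH.quad_nonneg hA' (fun i => x i.castSucc)
      simpa [Matrix.map_apply, Matrix.submatrix_apply] using this
    · -- last diagonal entry is positive
      set c : ℝ := A l l with hcdef
      set b : Fin (n+1+2) → ℝ := fun i => A i l with hbdef
      set D : Matrix (Fin (n+1+2)) (Fin (n+1+2)) ℝ :=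
        Matrix.of fun i j => b i * b j / c with hD
      set B : Matrix (Fin (n+1+2)) (Fin (n+1+2)) ℝ :=
        Matrix.of fun i j => A i j - D i j with hB
      have hbl : b l = c := rfl
      have hDnn : ∀ i j, 0 ≤ D i j := fun i j =>
        div_nonneg (mul_nonneg (hnn i l) (hnn j l)) hc.le
      have hDsym : ∀ i j, D i j = D j i := fun i j => by
        simp only [hD, Matrix.of_apply]; ring
      have quadD : ∀ x : Fin (n+1+2) → ℝ,
          ∑ i, ∑ j, x i * D i j * x j = (∑ i, x i * b i) * (∑ i, x i * b i) / c := by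
        intro x
        rw [Finset.sum_mul_sum, Finset.sum_div]
        refine Finset.sum_congr rfl fun i _ => ?_
        rw [Finset.sum_div]
        refine Finset.sum_congr rfl fun j _ => ?_
        simp only [hD, Matrix.of_apply]; ring
      have quadA_ge : ∀ x : Fin (n+1+2) → ℝ,
          (∑ i, x i * b i) * (∑ i, x i * b i) / c ≤ ∑ i, ∑ j, x i * A i j * x j := by
        intro x
        set T := ∑ i, x i * b i with hT
        set s : ℝ := T / c with hs
        set e : Fin (n+1+2) → ℝ := fun i => if i = l then s else 0 with he
        have h0 := FH.quad_nonneg hA (fun i => x i - e i)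
        have expand : ∀ i j : Fin (n+1+2), (x i - e i) * A i j * (x j - e j)
            = x i * A i j * x j - e i * (A i j * x j) - (x i * A i j) * e j
              + e i * A i j * e j := fun i j => by ring
        simp only [expand] at h0
        simp only [Finset.sum_add_distrib, Finset.sum_sub_distrib] at h0
        have S1 : ∑ i, ∑ j, e i * (A i j * x j) = s * T := by
          calc ∑ i, ∑ j, e i * (A i j * x j)
              = ∑ i, e i * ∑ j, A i j * x j :=
                Finset.sum_congr rfl fun i _ =>
                  (Finset.mul_sum Finset.univ (fun j => A i j * x j) (e i)).symm
            _ = s * ∑ j, A l j * x j := by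
                simp only [he, ite_mul, zero_mul, Finset.sum_ite_eq', Finset.mem_univ,
                  if_true]
            _ = s * T := by
                rw [hT]
                congr 1
                refine Finset.sum_congr rfl fun j _ => ?_
                rw [hsym l j]; exact mul_comm _ _
        have S2 : ∑ i, ∑ j, (x i * A i j) * e j = s * T := by
          have : ∀ i, ∑ j, (x i * A i j) * e j = (x i * A i l) * s := by
            intro i
            simp only [he, mul_ite, mul_zero, Finset.sum_ite_eq', Finset.mem_univ, if_true]
          simp only [this]
          rw [hT, Finset.mul_sum]
          refine Finset.sum_congr rfl fun i _ => ?_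
          simp only [hbdef]; ring
        have S3 : ∑ i, ∑ j, e i * A i j * e j = s * s * c := by
          have h1 : ∀ i, ∑ j, e i * A i j * e j = e i * A i l * s := by
            intro i
            simp only [he, mul_ite, mul_zero, Finset.sum_ite_eq', Finset.mem_univ, if_true]
          have h2 : ∀ i, e i * A i l * s = if i = l then s * A i l * s else 0 := by
            intro i; rw [he]; by_cases h : i = l <;> simp [h]
          simp only [h1, h2, Finset.sum_ite_eq', Finset.mem_univ, if_true]
          rw [← hcdef]; ring
        rw [S1, S2, S3] at h0
        have e1 : s * T = T * T / c := by rw [hs]; ring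
        have e2 : s * s * c = T * T / c := by rw [hs]; field_simp
        rw [e1, e2] at h0
        linarith
      have quadB : ∀ x : Fin (n+1+2) → ℝ, 0 ≤ ∑ i, ∑ j, x i * B i j * x j := by
        intro x
        have hsplit : ∑ i, ∑ j, x i * B i j * x j
            = (∑ i, ∑ j, x i * A i j * x j) - ∑ i, ∑ j, x i * D i j * x j := by
          rw [← Finset.sum_sub_distrib]
          refine Finset.sum_congr rfl fun i _ => ?_
          rw [← Finset.sum_sub_distrib]
          refine Finset.sum_congr rfl fun j _ => ?_
          simp only [hB, Matrix.of_apply]; ring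
        rw [hsplit, quadD]
        linarith [quadA_ge x]
      have hBrow : ∀ j, B l j = 0 := by
        intro j
        have h1 : B l j = A l j - c * A j l / c := rfl
        rw [h1, hsym l j, mul_div_cancel_left₀ _ hc.ne', sub_self]
      have hBcol : ∀ i, B i l = 0 := by
        intro i
        have h1 : B i l = A i l - A i l * c / c := rfl
        rw [h1, mul_div_assoc, div_self hc.ne', mul_one, sub_self]
      have hB' : (B.submatrix Fin.castSucc Fin.castSucc).PosSemidef := by
        refine FH.psd_of_quad (fun i j => by
          simp only [Matrix.submatrix_apply, hB, Matrix.of_apply, hsym, hDsym]) fun y => ?_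
        set z : Fin (n+1+2) → ℝ := Fin.snoc y 0 with hz
        have h0 := quadB z
        rw [FH.sum_reduce (fun i j => z i * B i j * z j)
          (fun j => by
            have hzl : z l = 0 := Fin.snoc_last _ _
            show z l * B l j * z j = 0
            rw [hzl]; ring)
          (fun i => by
            have hzl : z l = 0 := Fin.snoc_last _ _
            show z i * B i l * z l = 0
            rw [hzl]; ring)] at h0
        have hzc : ∀ i : Fin (n+2), z i.castSucc = y i := fun i => Fin.snoc_castSucc _ _ _
        simpa only [Matrix.submatrix_apply, hzc] using h0
      set CT : ℝ → Matrix (Fin (n+1+2)) (Fin (n+1+2)) ℝ :=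
        fun t => Matrix.of fun i j => (1-t) * D i j + t * A i j with hCT
      have hCtnn : ∀ t, 0 ≤ t → t ≤ 1 → ∀ i j, 0 ≤ CT t i j := by
        intro t ht0 ht1 i j
        exact add_nonneg (mul_nonneg (by linarith) (hDnn i j)) (mul_nonneg ht0 (hnn i j))
      have hCt_psd : ∀ t, 0 ≤ t → t ≤ 1 → (CT t).PosSemidef := by
        intro t ht0 ht1
        refine FH.psd_of_quad (fun i j => by
          simp only [hCT, Matrix.of_apply, hsym i j, hDsym i j]) fun y => ?_
        have hsplit : ∑ i, ∑ j, y i * CT t i j * y j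
            = (1-t) * (∑ i, ∑ j, y i * D i j * y j) + t * (∑ i, ∑ j, y i * A i j * y j) := by
          rw [Finset.mul_sum, Finset.mul_sum, ← Finset.sum_add_distrib]
          refine Finset.sum_congr rfl fun i _ => ?_
          rw [Finset.mul_sum, Finset.mul_sum, ← Finset.sum_add_distrib]
          refine Finset.sum_congr rfl fun j _ => ?_
          simp only [hCT, Matrix.of_apply]; ring
        rw [hsplit, quadD]
        have h1 := FH.quad_nonneg hA y
        have h2 : 0 ≤ (∑ i, y i * b i) * (∑ i, y i * b i) / c :=
          div_nonneg (mul_self_nonneg _) hc.le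
        have h3 : (0:ℝ) ≤ 1 - t := by linarith
        exact add_nonneg (mul_nonneg h3 h2) (mul_nonneg ht0 h1)
      -- main computation
      refine FH.psd_of_quad msym fun x => ?_
      have hentry : ∀ i j : Fin (n+1+2), x i * (A.map (powF α)) i j * x j
          = x i * D i j ^ α * x j
            + ∫ t in (0:ℝ)..1,
                x i * (α * (A i j - D i j) * ((1-t) * D i j + t * A i j) ^ (α-1)) * x j := by
        intro i j
        rw [Matrix.map_apply, FH.powF_eq hαne, FH.key_int hα1 (A i j) (D i j), mul_add,
          add_mul]
        congr 1
        rw [← intervalIntegral.integral_const_mul, ← intervalIntegral.integral_mul_const]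
      have hcont : ∀ i j : Fin (n+1+2), Continuous
          (fun t => x i * (α * (A i j - D i j) * ((1-t) * D i j + t * A i j) ^ (α-1)) * x j) := by
        intro i j
        have hu : Continuous fun t : ℝ => (1-t) * D i j + t * A i j := by fun_prop
        have h1 : Continuous fun t : ℝ => ((1-t) * D i j + t * A i j) ^ (α-1) :=
          (FH.cont_rpow (by linarith : (0:ℝ) ≤ α - 1)).comp hu
        exact (continuous_const.mul (continuous_const.mul h1)).mul continuous_const
      have hintg : ∀ i j : Fin (n+1+2), IntervalIntegrable
          (fun t => x i * (α * (A i j - D i j) * ((1-t) * D i j + t * A i j) ^ (α-1)) * x j)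
          MeasureTheory.volume 0 1 := fun i j => (hcont i j).intervalIntegrable 0 1
      have hintg2 : ∀ i : Fin (n+1+2), IntervalIntegrable
          (fun t => ∑ j, x i * (α * (A i j - D i j) * ((1-t) * D i j + t * A i j) ^ (α-1)) * x j)
          MeasureTheory.volume 0 1 := fun i =>
        (continuous_finset_sum Finset.univ fun j _ => hcont i j).intervalIntegrable 0 1
      have hsum : ∑ i, ∑ j, x i * (A.map (powF α)) i j * x j
          = (∑ i, ∑ j, x i * D i j ^ α * x j)
            + ∫ t in (0:ℝ)..1, ∑ i, ∑ j,
                x i * (α * (A i j - D i j) * ((1-t) * D i j + t * A i j) ^ (α-1)) * x j := by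
        have step1 : ∑ i, ∑ j, x i * (A.map (powF α)) i j * x j
            = (∑ i, ∑ j, x i * D i j ^ α * x j)
              + ∑ i, ∑ j, ∫ t in (0:ℝ)..1,
                  x i * (α * (A i j - D i j) * ((1-t) * D i j + t * A i j) ^ (α-1)) * x j := by
          rw [← Finset.sum_add_distrib]
          refine Finset.sum_congr rfl fun i _ => ?_
          rw [← Finset.sum_add_distrib]
          exact Finset.sum_congr rfl fun j _ => hentry i j
        have step2 : (∫ t in (0:ℝ)..1, ∑ i, ∑ j,
              x i * (α * (A i j - D i j) * ((1-t) * D i j + t * A i j) ^ (α-1)) * x j)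
            = ∑ i, ∑ j, ∫ t in (0:ℝ)..1,
                x i * (α * (A i j - D i j) * ((1-t) * D i j + t * A i j) ^ (α-1)) * x j := by
          exact (intervalIntegral.integral_finset_sum (fun i _ => hintg2 i)).trans
            (Finset.sum_congr rfl fun i _ =>
              intervalIntegral.integral_finset_sum (fun j _ => hintg i j))
        rw [step1]
        congr 1
        exact step2.symm
      rw [hsum]
      have term1 : 0 ≤ ∑ i, ∑ j, x i * D i j ^ α * x j := by
        have hDpow : ∀ i j : Fin (n+1+2),
            (D i j) ^ α = (b i ^ α) * (b j ^ α) * ((c:ℝ) ^ α)⁻¹ := by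
          intro i j
          have h1 : D i j = b i * b j / c := rfl
          rw [h1, Real.div_rpow (mul_nonneg (hnn i l) (hnn j l)) hc.le,
            Real.mul_rpow (hnn i l) (hnn j l), div_eq_mul_inv]
        simp only [hDpow]
        exact FH.quad_rank1 (fun i => b i ^ α) _ (inv_nonneg.mpr (Real.rpow_nonneg hc.le α)) x
      have term2 : 0 ≤ ∫ t in (0:ℝ)..1, ∑ i, ∑ j,
          x i * (α * (A i j - D i j) * ((1-t) * D i j + t * A i j) ^ (α-1)) * x j := by
        refine intervalIntegral.integral_nonneg (by norm_num) fun t ht => ?_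
        obtain ⟨ht0, ht1⟩ := ht
        have hfac : ∑ i, ∑ j, x i * (α * (A i j - D i j) * ((1-t) * D i j + t * A i j) ^ (α-1)) * x j
            = α * ∑ i, ∑ j, x i * (B i j * (CT t i j) ^ (α-1)) * x j := by
          rw [Finset.mul_sum]
          refine Finset.sum_congr rfl fun i _ => ?_
          rw [Finset.mul_sum]
          refine Finset.sum_congr rfl fun j _ => ?_
          have h1 : B i j = A i j - D i j := rfl
          have h2 : CT t i j = (1-t) * D i j + t * A i j := rfl
          rw [h1, h2]; ring
        rw [hfac]
        refine mul_nonneg (by linarith) ?_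
        rcases eq_or_lt_of_le hα1 with h1 | h1
        · simp only [← h1, sub_self, Real.rpow_zero, mul_one]
          exact quadB x
        · have hne : α - 1 ≠ 0 := ne_of_gt (by linarith)
          have hrw : ∀ i j : Fin (n+1+2), (CT t i j) ^ (α-1) = powF (α-1) (CT t i j) :=
            fun i j => (FH.powF_eq hne _).symm
          simp only [hrw]
          rw [FH.sum_reduce (fun i j => x i * (B i j * powF (α-1) (CT t i j)) * x j)
            (fun j => by
              show x l * (B l j * powF (α-1) (CT t l j)) * x j = 0
              rw [hBrow j]; ring)
            (fun i => by
              show x i * (B i l * powF (α-1) (CT t i l)) * x l = 0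
              rw [hBcol i]; ring)]
          have hN := ih (α - 1) (by push_cast at hα ⊢; linarith)
            ((CT t).submatrix Fin.castSucc Fin.castSucc)
            ((hCt_psd t ht0 ht1).submatrix _)
            (fun i j => hCtnn t ht0 ht1 _ _)
          have hfin := FH.schur_quad hB' hN (fun i => x i.castSucc)
          simpa only [Matrix.submatrix_apply, Matrix.map_apply] using hfin
      linarith


end Main

/-- FitzGerald–Horn, positive part: if `α` is a positive integer or `α ≥ n - 2`, then the
entrywise `α`-th power of any `n × n` positive semidefinite matrix with nonnegative entries
is positive semidefinite. -/
theorem stmt0 (n : ℕ) (hn : 2 ≤ n) (α : ℝ)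
    (hα : (∃ k : ℕ, 0 < k ∧ α = k) ∨ (n : ℝ) - 2 ≤ α)
    (A : Matrix (Fin n) (Fin n) ℝ) (hA : A.PosSemidef) (hnonneg : ∀ i j, 0 ≤ A i j) :
    (A.map (powF α)).PosSemidef := by
  rcases hα with ⟨k, hk, rfl⟩ | hα
  · -- natural power case
    obtain ⟨k', rfl⟩ : ∃ k', k = k' + 1 := ⟨k - 1, by omega⟩
    have hpow := FH.hadamard_pow hA k'
    have heq : A.map (powF ((k' + 1 : ℕ) : ℝ)) = Matrix.of fun i j => A i j ^ (k' + 1) := by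
      ext i j
      rw [Matrix.map_apply, Matrix.of_apply]
      rcases eq_or_ne (A i j) 0 with h | h
      · rw [h, FH.powF_zero, zero_pow (Nat.succ_ne_zero k')]
      · rw [FH.powF_of_ne h, Real.rpow_natCast]
    rw [heq]
    exact hpow
  · obtain ⟨m, rfl⟩ : ∃ m, n = m + 2 := ⟨n - 2, by omega⟩
    refine FH.main m α ?_ A hA hnonneg
    push_cast at hα ⊢
    linarith
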